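/- Let f be a classical solution of the BDY PDE on [0,∞) × [0,∞) such that v ↦ v f(v,t) and v ↦ v ∂_vv f(v,t) are integrable for each t, ∫₀^∞ f(v,t) dv = 1 for all t ≥ 0, and v f(v,t), v ∂_v f(v,t) → 0 as v → ∞. Then d/dt ∫₀^∞ v f(v,t) dv = 0 for all t ≥ 0; in particular, the BDY PDE preserves the mean wealth. -/

import Mathlib

open MeasureTheory Set Filter

/-- **Mean-wealth conservation for the BDY PDE.**
Let `f` be a classical solution of the BDY PDE
`∂_t f = ∂_vv f + f(0,t) ∂_v f` on `(0,∞)` with the nonlinear Robin boundary condition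
`∂_v f(0,t) + f(0,t)² = 0`, such that `v ↦ v f(v,t)` and `v ↦ v ∂_vv f(v,t)` are integrable
for each `t`, `∫₀^∞ f(v,t) dv = 1` for all `t ≥ 0`, `v f(v,t) → 0` and `v ∂_v f(v,t) → 0`
as `v → ∞`, and such that `t ↦ ∫₀^∞ v f(v,t) dv` may be differentiated under the integral
sign. Then `d/dt ∫₀^∞ v f(v,t) dv = 0` for all `t ≥ 0`. -/
theorem BDY_PDE_mean_conservation
    (f ft fv fvv : ℝ → ℝ → ℝ)
    (hcont : ContinuousOn (fun p : ℝ × ℝ => f p.1 p.2) (Ici 0 ×ˢ Ici 0))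
    (hfv : ∀ v t : ℝ, 0 ≤ v → 0 ≤ t → HasDerivAt (fun w => f w t) (fv v t) v)
    (hfvv : ∀ v t : ℝ, 0 ≤ v → 0 ≤ t → HasDerivAt (fun w => fv w t) (fvv v t) v)
    (hft : ∀ v t : ℝ, 0 ≤ v → 0 ≤ t → HasDerivAt (fun s => f v s) (ft v t) t)
    (hint : ∀ t : ℝ, 0 ≤ t → IntegrableOn (fun v => f v t) (Ioi 0))
    (hint_fv : ∀ t : ℝ, 0 ≤ t → IntegrableOn (fun v => fv v t) (Ioi 0))
    (hint_fvv : ∀ t : ℝ, 0 ≤ t → IntegrableOn (fun v => fvv v t) (Ioi 0))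
    (hint_vf : ∀ t : ℝ, 0 ≤ t → IntegrableOn (fun v => v * f v t) (Ioi 0))
    (hint_vfvv : ∀ t : ℝ, 0 ≤ t → IntegrableOn (fun v => v * fvv v t) (Ioi 0))
    (hmass : ∀ t : ℝ, 0 ≤ t → ∫ v in Ioi (0:ℝ), f v t = 1)
    (hdecay : ∀ t : ℝ, 0 ≤ t → Tendsto (fun v => f v t) atTop (nhds 0))
    (hdecay_fv : ∀ t : ℝ, 0 ≤ t → Tendsto (fun v => fv v t) atTop (nhds 0))
    (hdecay_vf : ∀ t : ℝ, 0 ≤ t → Tendsto (fun v => v * f v t) atTop (nhds 0))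
    (hdecay_vfv : ∀ t : ℝ, 0 ≤ t → Tendsto (fun v => v * fv v t) atTop (nhds 0))
    (hPDE : ∀ v t : ℝ, 0 < v → 0 ≤ t → ft v t = fvv v t + f 0 t * fv v t)
    (hBC : ∀ t : ℝ, 0 ≤ t → fv 0 t + (f 0 t) ^ 2 = 0)
    (hDUI : ∀ t : ℝ, 0 ≤ t →
      HasDerivAt (fun s => ∫ v in Ioi (0:ℝ), v * f v s)
        (∫ v in Ioi (0:ℝ), v * ft v t) t) :
    ∀ t : ℝ, 0 ≤ t → deriv (fun s => ∫ v in Ioi (0:ℝ), v * f v s) t = 0 := by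
  intro t ht
  rw [(hDUI t ht).deriv]
  -- ∫ fv = - f 0 t
  have hI_fv : ∫ v in Ioi (0:ℝ), fv v t = - f 0 t := by
    have h := integral_Ioi_of_hasDerivAt_of_tendsto
      ((hfv 0 t le_rfl ht).continuousAt.continuousWithinAt)
      (fun x hx => hfv x t (le_of_lt hx) ht) (hint_fv t ht) (hdecay t ht)
    simpa using h
  -- ∫ v * fvv = f 0 t
  have hI_vfvv : ∫ v in Ioi (0:ℝ), v * fvv v t = f 0 t := by
    have hg : ∀ x ∈ Ioi (0:ℝ),
        HasDerivAt (fun v => v * fv v t) (fv x t + x * fvv x t) x := by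
      intro x hx
      have := (hasDerivAt_id x).fun_mul (hfvv x t (le_of_lt hx) ht)
      simpa [mul_comm] using this
    have hgc : ContinuousWithinAt (fun v => v * fv v t) (Ici 0) 0 :=
      (continuousAt_id.mul (hfvv 0 t le_rfl ht).continuousAt).continuousWithinAt
    have h0 := integral_Ioi_of_hasDerivAt_of_tendsto hgc hg
      ((hint_fv t ht).add (hint_vfvv t ht)) (hdecay_vfv t ht)
    rw [integral_add (hint_fv t ht) (hint_vfvv t ht), hI_fv] at h0
    simp only [zero_mul, sub_zero] at h0
    linarith
  by_cases hI : IntegrableOn (fun v => v * ft v t) (Ioi 0)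
  · by_cases hf0z : f 0 t = 0
    · have heq : ∫ v in Ioi (0:ℝ), v * ft v t = ∫ v in Ioi (0:ℝ), v * fvv v t := by
        apply setIntegral_congr_fun measurableSet_Ioi
        intro x hx
        simp [hPDE x t hx ht, hf0z]
      rw [heq, hI_vfvv, hf0z]
    · -- v * fv integrable
      have hvfv_int : IntegrableOn (fun v => v * fv v t) (Ioi 0) := by
        have h1 : IntegrableOn (fun v => (v * ft v t - v * fvv v t) / f 0 t) (Ioi 0) :=
          (hI.sub (hint_vfvv t ht)).div_const _
        apply h1.congr
        filter_upwards [ae_restrict_mem measurableSet_Ioi] with x hx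
        rw [hPDE x t hx ht]
        field_simp
        ring
      -- ∫ v * fv = -1
      have hI_vfv : ∫ v in Ioi (0:ℝ), v * fv v t = -1 := by
        have hh : ∀ x ∈ Ioi (0:ℝ),
            HasDerivAt (fun v => v * f v t) (f x t + x * fv x t) x := by
          intro x hx
          have := (hasDerivAt_id x).fun_mul (hfv x t (le_of_lt hx) ht)
          simpa [mul_comm] using this
        have hhc : ContinuousWithinAt (fun v => v * f v t) (Ici 0) 0 :=
          (continuousAt_id.mul (hfv 0 t le_rfl ht).continuousAt).continuousWithinAt
        have h0 := integral_Ioi_of_hasDerivAt_of_tendsto hhc hh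
          ((hint t ht).add hvfv_int) (hdecay_vf t ht)
        rw [integral_add (hint t ht) hvfv_int, hmass t ht] at h0
        simp only [zero_mul, sub_zero] at h0
        linarith
      have heq : ∫ v in Ioi (0:ℝ), v * ft v t
          = ∫ v in Ioi (0:ℝ), (v * fvv v t + f 0 t * (v * fv v t)) := by
        apply setIntegral_congr_fun measurableSet_Ioi
        intro x hx
        show x * ft x t = x * fvv x t + f 0 t * (x * fv x t)
        rw [hPDE x t hx ht]; ring
      rw [heq, integral_add (hint_vfvv t ht) (hvfv_int.const_mul _),
        integral_const_mul, hI_vfvv, hI_vfv]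
      ring
  · exact integral_undef hI
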